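/- arXiv:1809.01220 — 3 statements merged into one kernel-verified Lean document; each statement's English description precedes it below -/
import Mathlib

section
/- Suppose r(h) < 1 for every safe history h. Let Δ : ℝ → ℝ be concave and monotone nondecreasing with 0 ≤ Δ x ≤ 1 for all x ∈ ℝ, and let f, g be real-valued functions on trajectories with ∑_{all trajectories τ} p(τ)·f(τ) ≤ ∑_{all trajectories τ} p(τ)·g(τ). If ser(τ) ≤ Δ(f(τ)) for every safe trajectory τ with p(τ) > 0, then er(s₀, π) ≤ Δ(∑_{all trajectories τ} p(τ)·g(τ)). -/
open Finset
open scoped Classical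

noncomputable section

/-- The restriction of a trajectory `τ : Fin (n+1) → S` to its first `t+1` entries. -/
def pre {S : Type*} {n : ℕ} (τ : Fin (n + 1) → S) (t : ℕ) (ht : t + 1 ≤ n + 1) :
    Fin (t + 1) → S :=
  fun i => τ (Fin.castLE ht i)

/-- The probability of the trajectory `τ` under policy `π`. -/
def prob {S A : Type*} {n : ℕ} (T : S → A → S → ℝ)
    (π : (t : ℕ) → (Fin (t + 1) → S) → A) (τ : Fin (n + 1) → S) : ℝ :=
  ∏ t : Fin n, T (τ t.castSucc) (π t (pre τ t (Nat.succ_le_succ t.isLt.le))) (τ t.succ)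

/-- The immediate risk of a history `h` of length `t+1`: the probability that the action
taken by the policy at `h` leads to an unsafe state. -/
def risk {S A : Type*} [Fintype S] (T : S → A → S → ℝ) (C : Set S)
    (π : (t : ℕ) → (Fin (t + 1) → S) → A) {t : ℕ} (h : Fin (t + 1) → S) : ℝ :=
  ∑ s' ∈ univ.filter (fun s' => s' ∉ C), T (h (Fin.last t)) (π t h) s'

/-- The survival product of a trajectory. -/
def surv {S A : Type*} [Fintype S] {n : ℕ} (T : S → A → S → ℝ) (C : Set S)
    (π : (t : ℕ) → (Fin (t + 1) → S) → A) (τ : Fin (n + 1) → S) : ℝ :=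
  ∏ t : Fin n, (1 - risk T C π (pre τ t (Nat.succ_le_succ t.isLt.le)))

/-- The sequence execution risk of a trajectory: `(1 - P(τ))/P(τ)` for safe trajectories,
and `0` otherwise. -/
def ser {S A : Type*} [Fintype S] {n : ℕ} (T : S → A → S → ℝ) (C : Set S)
    (π : (t : ℕ) → (Fin (t + 1) → S) → A) (τ : Fin (n + 1) → S) : ℝ :=
  if ∀ i, τ i ∈ C then (1 - surv T C π τ) / surv T C π τ else 0

/-- The execution risk of the policy `π` from the initial state `s₀`. -/
def er {S A : Type*} [Fintype S] (n : ℕ) (T : S → A → S → ℝ) (C : Set S)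
    (π : (t : ℕ) → (Fin (t + 1) → S) → A) (s₀ : S) : ℝ :=
  1 - ∑ τ ∈ univ.filter (fun τ : Fin (n + 1) → S => τ 0 = s₀ ∧ ∀ i, τ i ∈ C), prob T π τ

/- ### Auxiliary lemmas -/

lemma pre_snoc {S : Type*} {t : ℕ} (h' : Fin (t + 1) → S) (s' : S) (m : ℕ) (hm : m + 1 ≤ t + 1) :
    pre (Fin.snoc h' s' : Fin (t + 2) → S) m (le_trans hm (Nat.le_succ _)) = pre h' m hm := by
  funext j
  show (Fin.snoc h' s' : Fin (t + 2) → S) _ = _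
  have h1 : (Fin.castLE (le_trans hm (Nat.le_succ _)) j : Fin (t + 2)) =
      Fin.castSucc (Fin.castLE hm j) := by ext; simp
  rw [h1, Fin.snoc_castSucc]
  rfl

lemma pre_rfl {S : Type*} {t : ℕ} (h' : Fin (t + 1) → S) (hm : t + 1 ≤ t + 1) :
    pre h' t hm = h' := by
  funext j
  show h' (Fin.castLE hm j) = h' j
  congr 1

lemma pre_last {S : Type*} {n : ℕ} (τ : Fin (n + 1) → S) (i : Fin n) :
    pre τ i (Nat.succ_le_succ i.isLt.le) (Fin.last i) = τ i.castSucc :=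
  congrArg τ (Fin.ext rfl)

lemma pre_zero {S : Type*} {n : ℕ} (τ : Fin (n + 1) → S) (t : ℕ) (ht : t + 1 ≤ n + 1) :
    pre τ t ht 0 = τ 0 :=
  congrArg τ (Fin.ext (by simp))

/-- The central counting lemma: if `W` assigns to every (reachable) history a probability
distribution over next states, then the total weight of all trajectories is `1`. -/
lemma key_sum {S : Type*} [Fintype S] (n : ℕ) (s₀ : S)
    (W : (t : ℕ) → (Fin (t + 1) → S) → S → ℝ)
    (hW : ∀ t, t < n → ∀ h : Fin (t + 1) → S, h 0 = s₀ →
      (∏ i : Fin t, W i (pre h i (Nat.succ_le_succ i.isLt.le)) (h i.succ)) ≠ 0 →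
      ∑ s', W t h s' = 1) :
    ∀ t, t ≤ n → ∑ h ∈ univ.filter (fun h : Fin (t + 1) → S => h 0 = s₀),
      ∏ i : Fin t, W i (pre h i (Nat.succ_le_succ i.isLt.le)) (h i.succ) = 1 := by
  intro t
  induction t with
  | zero =>
    intro _
    have hfil : univ.filter (fun h : Fin 1 → S => h 0 = s₀) = {fun _ => s₀} := by
      ext h
      simp only [mem_filter, mem_univ, true_and, mem_singleton]
      constructor
      · intro hh; funext i; rw [Subsingleton.elim i 0]; exact hh
      · intro hh; rw [hh]
    rw [hfil, Finset.sum_singleton]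
    simp
  | succ t ih =>
    intro htn
    have ht : t < n := htn
    have IH := ih ht.le
    rw [Finset.sum_filter] at IH ⊢
    rw [← Equiv.sum_comp (Fin.snocEquiv (fun _ : Fin (t + 2) => S))]
    rw [Fintype.sum_prod_type]
    rw [Finset.sum_comm]
    have hterm : ∀ h' : Fin (t + 1) → S, ∀ s' : S,
        (if (Fin.snocEquiv (fun _ : Fin (t+2) => S)) (s', h') 0 = s₀ then
          ∏ i : Fin (t+1), W i (pre ((Fin.snocEquiv (fun _ : Fin (t+2) => S)) (s', h')) i
              (Nat.succ_le_succ i.isLt.le)) (((Fin.snocEquiv (fun _ : Fin (t+2) => S)) (s', h')) i.succ)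
          else 0)
        = (if h' 0 = s₀ then
            (∏ i : Fin t, W i (pre h' i (Nat.succ_le_succ i.isLt.le)) (h' i.succ)) * W t h' s'
          else 0) := by
      intro h' s'
      have hsnoc : ((Fin.snocEquiv (fun _ : Fin (t+2) => S)) (s', h') : Fin (t+2) → S)
          = Fin.snoc h' s' := rfl
      rw [hsnoc]
      have h0 : (Fin.snoc h' s' : Fin (t+2) → S) 0 = h' 0 := by
        rw [show (0 : Fin (t+2)) = Fin.castSucc 0 by ext; rfl, Fin.snoc_castSucc]
      rw [h0]
      congr 1
      rw [Fin.prod_univ_castSucc]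
      congr 1
      · apply Finset.prod_congr rfl
        intro i _
        have hp : pre (Fin.snoc h' s' : Fin (t+2) → S) i.castSucc (Nat.succ_le_succ i.castSucc.isLt.le)
            = pre h' i (Nat.succ_le_succ i.isLt.le) := pre_snoc h' s' i _
        rw [show (Fin.snoc h' s' : Fin (t+2) → S) i.castSucc.succ = h' i.succ by
          rw [Fin.succ_castSucc, Fin.snoc_castSucc]]
        exact congrArg₂ (fun hh ss => W i hh ss) hp rfl
      · have hp : pre (Fin.snoc h' s' : Fin (t+2) → S) t (Nat.succ_le_succ (Nat.lt_succ_self t).le)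
            = h' := (pre_snoc h' s' t le_rfl).trans (pre_rfl h' le_rfl)
        rw [show (Fin.snoc h' s' : Fin (t+2) → S) (Fin.last t).succ = s' by
          rw [show (Fin.last t).succ = Fin.last (t+1) by ext; rfl, Fin.snoc_last]]
        exact congrArg (fun hh => W t hh s') hp
    calc ∑ h' : Fin (t+1) → S, ∑ s' : S,
          (if (Fin.snocEquiv (fun _ : Fin (t+2) => S)) (s', h') 0 = s₀ then
            ∏ i : Fin (t+1), W i (pre ((Fin.snocEquiv (fun _ : Fin (t+2) => S)) (s', h')) i
                (Nat.succ_le_succ i.isLt.le)) (((Fin.snocEquiv (fun _ : Fin (t+2) => S)) (s', h')) i.succ)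
            else 0)
        = ∑ h' : Fin (t+1) → S,
            (if h' 0 = s₀ then ∏ i : Fin t, W i (pre h' i (Nat.succ_le_succ i.isLt.le)) (h' i.succ)
             else 0) := by
          apply Finset.sum_congr rfl
          intro h' _
          rw [Finset.sum_congr rfl (fun s' _ => hterm h' s')]
          by_cases h0 : h' 0 = s₀
          · simp only [if_pos h0]
            rw [← Finset.mul_sum]
            by_cases hz : (∏ i : Fin t, W i (pre h' i (Nat.succ_le_succ i.isLt.le)) (h' i.succ)) = 0
            · rw [hz, zero_mul]
            · rw [hW t ht h' h0 hz, mul_one]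
          · simp only [if_neg h0, Finset.sum_const_zero]
      _ = 1 := IH

/-- **Theorem 1 of the paper.** If the local constraint `ser(τ) ≤ Δ(f(τ))` holds for every
safe trajectory reachable under the policy, where `Δ` is concave, nondecreasing and
`[0,1]`-valued and `E[f] ≤ E[g]`, then the execution risk is bounded by `Δ(E[g])`. -/
theorem vulcan_theorem_one
    {S A : Type*} [Fintype S] [Nonempty S] [Fintype A] [Nonempty A]
    (n : ℕ) (hn : 1 ≤ n)
    (C : Set S) (s₀ : S) (hs₀ : s₀ ∈ C)
    (T : S → A → S → ℝ)
    (hT0 : ∀ s a s', 0 ≤ T s a s')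
    (hT1 : ∀ s a, ∑ s', T s a s' = 1)
    (π : (t : ℕ) → (Fin (t + 1) → S) → A)
    (hrisk : ∀ (t : ℕ), t ≤ n → ∀ h : Fin (t + 1) → S, h 0 = s₀ → (∀ i, h i ∈ C) →
      risk T C π h < 1)
    (Δ : ℝ → ℝ)
    (hΔconc : ConcaveOn ℝ Set.univ Δ)
    (hΔmono : Monotone Δ)
    (hΔ0 : ∀ x, 0 ≤ Δ x) (hΔ1 : ∀ x, Δ x ≤ 1)
    (f g : (Fin (n + 1) → S) → ℝ)
    (hfg : ∑ τ ∈ univ.filter (fun τ : Fin (n + 1) → S => τ 0 = s₀), prob T π τ * f τ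
        ≤ ∑ τ ∈ univ.filter (fun τ : Fin (n + 1) → S => τ 0 = s₀), prob T π τ * g τ)
    (hser : ∀ τ : Fin (n + 1) → S, τ 0 = s₀ → (∀ i, τ i ∈ C) → 0 < prob T π τ →
      ser T C π τ ≤ Δ (f τ)) :
    er n T C π s₀
      ≤ Δ (∑ τ ∈ univ.filter (fun τ : Fin (n + 1) → S => τ 0 = s₀), prob T π τ * g τ) := by
  classical
  have hp0 : ∀ τ : Fin (n + 1) → S, 0 ≤ prob T π τ := fun τ =>
    Finset.prod_nonneg fun i _ => hT0 _ _ _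
  -- total mass is 1
  have hsum1 : ∑ τ ∈ univ.filter (fun τ : Fin (n + 1) → S => τ 0 = s₀), prob T π τ = 1 := by
    have hk := key_sum n s₀ (fun t h s' => T (h (Fin.last t)) (π t h) s')
      (fun t _ h _ _ => hT1 _ _) n le_rfl
    rw [← hk]
    apply Finset.sum_congr rfl
    intro τ _
    unfold prob
    apply Finset.prod_congr rfl
    intro i _
    exact (congrArg
      (fun x => T x (π (i : ℕ) (pre τ (i : ℕ) (Nat.succ_le_succ i.isLt.le))) (τ i.succ))
      (pre_last τ i)).symm
  set safeF := univ.filter (fun τ : Fin (n + 1) → S => τ 0 = s₀ ∧ ∀ i, τ i ∈ C) with hsafeF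
  -- positivity of the survival product for safe trajectories
  have hsurvpos : ∀ τ : Fin (n + 1) → S, τ 0 = s₀ → (∀ i, τ i ∈ C) → 0 < surv T C π τ := by
    intro τ h0 hs
    apply Finset.prod_pos
    intro i _
    have hi : risk T C π (pre τ i (Nat.succ_le_succ i.isLt.le)) < 1 := by
      apply hrisk i i.isLt.le
      · rw [pre_zero]; exact h0
      · intro j; exact hs _
    linarith
  -- the W₂ kernel: normalized restriction to safe states
  set W2 : (t : ℕ) → (Fin (t + 1) → S) → S → ℝ := fun t h s' =>
    if s' ∈ C then T (h (Fin.last t)) (π t h) s' / (1 - risk T C π h) else 0 with hW2def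
  have hW2 : ∀ t, t < n → ∀ h : Fin (t + 1) → S, h 0 = s₀ →
      (∏ i : Fin t, W2 i (pre h i (Nat.succ_le_succ i.isLt.le)) (h i.succ)) ≠ 0 →
      ∑ s', W2 t h s' = 1 := by
    intro t htn h h0 hprod
    have hsafe : ∀ i, h i ∈ C := by
      intro i
      refine Fin.cases ?_ ?_ i
      · rw [h0]; exact hs₀
      · intro j
        have hj := Finset.prod_ne_zero_iff.mp hprod j (mem_univ j)
        by_contra hc
        exact hj (if_neg hc)
    have hr : risk T C π h < 1 := hrisk t htn.le h h0 hsafe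
    have hr0 : (1 : ℝ) - risk T C π h ≠ 0 := by linarith
    have hsplit : ∀ s' : S, W2 t h s'
        = (if s' ∈ C then T (h (Fin.last t)) (π t h) s' else 0) / (1 - risk T C π h) := by
      intro s'
      show (if s' ∈ C then T (h (Fin.last t)) (π t h) s' / (1 - risk T C π h) else 0) = _
      by_cases hc : s' ∈ C
      · rw [if_pos hc, if_pos hc]
      · rw [if_neg hc, if_neg hc, zero_div]
    rw [Finset.sum_congr rfl (fun s' _ => hsplit s'), ← Finset.sum_div]
    have hsC : ∑ s', (if s' ∈ C then T (h (Fin.last t)) (π t h) s' else 0)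
        = 1 - risk T C π h := by
      have h1 := hT1 (h (Fin.last t)) (π t h)
      have h2 : ∀ s' : S, T (h (Fin.last t)) (π t h) s'
          = (if s' ∈ C then T (h (Fin.last t)) (π t h) s' else 0)
            + (if s' ∉ C then T (h (Fin.last t)) (π t h) s' else 0) := by
        intro s'; by_cases hc : s' ∈ C <;> simp [hc]
      rw [Finset.sum_congr rfl (fun s' _ => h2 s'), Finset.sum_add_distrib] at h1
      have h3 : risk T C π h
          = ∑ s', (if s' ∉ C then T (h (Fin.last t)) (π t h) s' else 0) :=
        Finset.sum_filter _ _
      linarith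
    rw [hsC, div_self hr0]
  -- total normalized mass of safe trajectories is 1
  have hsum2 : ∑ τ ∈ safeF, prob T π τ / surv T C π τ = 1 := by
    have hk := key_sum n s₀ W2 hW2 n le_rfl
    have hfil : safeF
        = (univ.filter (fun τ : Fin (n + 1) → S => τ 0 = s₀)).filter
            (fun τ => ∀ i, τ i ∈ C) := (Finset.filter_filter _ _ _).symm
    rw [hfil, Finset.sum_filter, ← hk]
    apply Finset.sum_congr rfl
    intro τ hτ
    have h0 : τ 0 = s₀ := (Finset.mem_filter.mp hτ).2
    by_cases hs : ∀ i, τ i ∈ C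
    · rw [if_pos hs]
      unfold prob surv
      rw [← Finset.prod_div_distrib]
      apply Finset.prod_congr rfl
      intro i _
      show _ = if τ i.succ ∈ C then
          T ((pre τ (i : ℕ) (Nat.succ_le_succ i.isLt.le)) (Fin.last (i : ℕ)))
            (π (i : ℕ) (pre τ (i : ℕ) (Nat.succ_le_succ i.isLt.le))) (τ i.succ)
            / (1 - risk T C π (pre τ (i : ℕ) (Nat.succ_le_succ i.isLt.le))) else 0
      rw [if_pos (hs i.succ), pre_last τ i]
    · rw [if_neg hs]
      symm
      obtain ⟨i, hi⟩ := not_forall.mp hs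
      rcases Fin.eq_zero_or_eq_succ i with rfl | ⟨j, rfl⟩
      · exact absurd (h0 ▸ hs₀) hi
      · apply Finset.prod_eq_zero (mem_univ j)
        exact if_neg hi
  -- rewrite `er` as the expected `ser`
  have hser_eq : ∀ τ ∈ safeF, prob T π τ * ser T C π τ
      = prob T π τ / surv T C π τ - prob T π τ := by
    intro τ hτ
    obtain ⟨h0, hs⟩ := (Finset.mem_filter.mp hτ).2
    have hpos := hsurvpos τ h0 hs
    unfold ser
    rw [if_pos hs]
    field_simp
  have her : er n T C π s₀ = ∑ τ ∈ safeF, prob T π τ * ser T C π τ := by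
    unfold er
    rw [← hsafeF]
    rw [Finset.sum_congr rfl hser_eq, Finset.sum_sub_distrib, hsum2]
  rw [her]
  have step1 : ∑ τ ∈ safeF, prob T π τ * ser T C π τ
      ≤ ∑ τ ∈ safeF, prob T π τ * Δ (f τ) := by
    apply Finset.sum_le_sum
    intro τ hτ
    obtain ⟨h0, hs⟩ := (Finset.mem_filter.mp hτ).2
    rcases (hp0 τ).lt_or_eq with hlt | heq
    · exact mul_le_mul_of_nonneg_left (hser τ h0 hs hlt) (hp0 τ)
    · rw [← heq, zero_mul, zero_mul]
  have step2 : ∑ τ ∈ safeF, prob T π τ * Δ (f τ)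
      ≤ ∑ τ ∈ univ.filter (fun τ : Fin (n + 1) → S => τ 0 = s₀), prob T π τ * Δ (f τ) := by
    apply Finset.sum_le_sum_of_subset_of_nonneg
    · intro τ hτ
      simp only [hsafeF, mem_filter, mem_univ, true_and] at hτ ⊢
      exact hτ.1
    · intro τ _ _
      exact mul_nonneg (hp0 τ) (hΔ0 _)
  have step3 : ∑ τ ∈ univ.filter (fun τ : Fin (n + 1) → S => τ 0 = s₀), prob T π τ * Δ (f τ)
      ≤ Δ (∑ τ ∈ univ.filter (fun τ : Fin (n + 1) → S => τ 0 = s₀), prob T π τ * f τ) := by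
    have hj := hΔconc.le_map_sum (t := univ.filter (fun τ : Fin (n + 1) → S => τ 0 = s₀))
      (w := fun τ => prob T π τ) (p := f) (fun τ _ => hp0 τ) hsum1 (fun τ _ => Set.mem_univ _)
    simpa [smul_eq_mul] using hj
  have step4 := hΔmono hfg
  linarith
end
end

section
/- Suppose r(h) < 1 for every safe history h. Then for every 0 ≤ t ≤ n and every safe history h of length t+1, ∑_{τ a safe trajectory with prefix_t τ = h} ∏_{i=t}^{n-1} T (τ i) (π (prefix_i τ)) (τ (i+1)) / (1 - r(prefix_i τ)) = 1. -/
open Finset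
open scoped Classical

noncomputable section

/-- **Lemma 1 of the paper.** Over all safe trajectories extending a safe history `h`,
the transition probabilities along safe continuations, each renormalized by the per-step
survival probability `1 - r`, sum to one. -/
theorem renormalized_safe_continuations_sum_to_one
    {S A : Type*} [Fintype S] [Nonempty S] [Fintype A] [Nonempty A]
    (n : ℕ) (hn : 1 ≤ n)
    (C : Set S) (s₀ : S) (hs₀ : s₀ ∈ C)
    (T : S → A → S → ℝ)
    (hT0 : ∀ s a s', 0 ≤ T s a s')
    (hT1 : ∀ s a, ∑ s', T s a s' = 1)
    (π : (t : ℕ) → (Fin (t + 1) → S) → A)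
    (hrisk : ∀ (t : ℕ), t ≤ n → ∀ h : Fin (t + 1) → S, h 0 = s₀ → (∀ i, h i ∈ C) →
      risk T C π h < 1)
    (t : ℕ) (ht : t ≤ n)
    (h : Fin (t + 1) → S) (hh0 : h 0 = s₀) (hhsafe : ∀ i, h i ∈ C) :
    ∑ τ ∈ univ.filter (fun τ : Fin (n + 1) → S =>
        (∀ i, τ i ∈ C) ∧ pre τ t (Nat.succ_le_succ ht) = h),
      ∏ i ∈ univ.filter (fun i : Fin n => t ≤ (i : ℕ)),
        T (τ i.castSucc) (π i (pre τ i (Nat.succ_le_succ i.isLt.le))) (τ i.succ)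
          / (1 - risk T C π (pre τ i (Nat.succ_le_succ i.isLt.le))) = 1 := by
  have key : ∀ d t (htd : t + d = n) (h : Fin (t + 1) → S), h 0 = s₀ → (∀ i, h i ∈ C) →
      ∑ τ ∈ univ.filter (fun τ : Fin (n + 1) → S =>
          (∀ i, τ i ∈ C) ∧ pre τ t (by omega) = h),
        ∏ i ∈ univ.filter (fun i : Fin n => t ≤ (i : ℕ)),
          T (τ i.castSucc) (π i (pre τ i (Nat.succ_le_succ i.isLt.le))) (τ i.succ)
            / (1 - risk T C π (pre τ i (Nat.succ_le_succ i.isLt.le))) = 1 := by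
    intro d
    induction d with
    | zero =>
      intro t htd h h0 hsafe
      have htn : t = n := by omega
      subst htn
      have hprodempty : univ.filter (fun i : Fin t => t ≤ (i : ℕ)) = ∅ := by
        ext i
        simp [Nat.not_le, i.isLt]
      have hset : (univ.filter (fun τ : Fin (t + 1) → S =>
          (∀ i, τ i ∈ C) ∧ pre τ t (by omega) = h)) = {h} := by
        ext τ
        simp only [mem_filter, mem_univ, true_and, mem_singleton]
        constructor
        · rintro ⟨_, hpe⟩
          exact hpe
        · rintro rfl
          exact ⟨hsafe, rfl⟩
      rw [hset, sum_singleton, hprodempty, prod_empty]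
    | succ d ih =>
      intro t htd h h0 hsafe
      have tlt : t < n := by omega
      set tn : Fin n := ⟨t, tlt⟩ with htn
      set t1 : Fin (n + 1) := ⟨t + 1, by omega⟩ with ht1
      -- set equality: fibers over next state
      have hAs : ∀ s' : S,
          (univ.filter (fun τ : Fin (n + 1) → S =>
            (∀ i, τ i ∈ C) ∧ pre τ t (by omega) = h)).filter (fun τ => τ t1 = s')
          = univ.filter (fun τ : Fin (n + 1) → S =>
            (∀ i, τ i ∈ C) ∧ pre τ (t + 1) (by omega) = Fin.snoc h s') := by
        intro s'
        ext τ
        simp only [mem_filter, mem_univ, true_and]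
        constructor
        · rintro ⟨⟨hsafeτ, hpt⟩, hτ1⟩
          refine ⟨hsafeτ, ?_⟩
          funext i
          refine Fin.lastCases ?_ ?_ i
          · rw [Fin.snoc_last]
            exact hτ1
          · intro j
            rw [Fin.snoc_castSucc]
            exact congrFun hpt j
        · rintro ⟨hsafeτ, hpre⟩
          have hpt : pre τ t (by omega) = h := by
            funext i
            have := congrFun hpre (Fin.castSucc i)
            rw [Fin.snoc_castSucc] at this
            exact this
          have hτ1 : τ t1 = s' := by
            have := congrFun hpre (Fin.last (t + 1))
            rw [Fin.snoc_last] at this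
            exact this
          exact ⟨⟨hsafeτ, hpt⟩, hτ1⟩
      have hfilter : univ.filter (fun i : Fin n => t ≤ (i : ℕ))
          = insert tn (univ.filter (fun i : Fin n => t + 1 ≤ (i : ℕ))) := by
        ext i
        simp only [mem_filter, mem_univ, true_and, mem_insert, Fin.ext_iff, htn]
        omega
      have htn_notmem : tn ∉ univ.filter (fun i : Fin n => t + 1 ≤ (i : ℕ)) := by
        simp [htn]
      have hρ : risk T C π h < 1 := hrisk t (by omega) h h0 hsafe
      have hρ0 : (1 : ℝ) - risk T C π h ≠ 0 := sub_ne_zero.mpr hρ.ne'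
      rw [← Finset.sum_fiberwise _ (fun τ : Fin (n + 1) → S => τ t1) _]
      have hstep : ∀ s' : S,
          ∑ τ ∈ (univ.filter (fun τ : Fin (n + 1) → S =>
              (∀ i, τ i ∈ C) ∧ pre τ t (by omega) = h)).filter (fun τ => τ t1 = s'),
            ∏ i ∈ univ.filter (fun i : Fin n => t ≤ (i : ℕ)),
              T (τ i.castSucc) (π i (pre τ i (Nat.succ_le_succ i.isLt.le))) (τ i.succ)
                / (1 - risk T C π (pre τ i (Nat.succ_le_succ i.isLt.le)))
          = (T (h (Fin.last t)) (π t h) s' / (1 - risk T C π h)) *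
            (if s' ∈ C then 1 else 0) := by
        intro s'
        rw [hAs s']
        by_cases hs' : s' ∈ C
        · simp only [hs', if_true, mul_one]
          have hIH : ∑ τ ∈ univ.filter (fun τ : Fin (n + 1) → S =>
                (∀ i, τ i ∈ C) ∧ pre τ (t + 1) (by omega) = Fin.snoc h s'),
              ∏ i ∈ univ.filter (fun i : Fin n => t + 1 ≤ (i : ℕ)),
                T (τ i.castSucc) (π i (pre τ i (Nat.succ_le_succ i.isLt.le))) (τ i.succ)
                  / (1 - risk T C π (pre τ i (Nat.succ_le_succ i.isLt.le))) = 1 := by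
            have h0' : (Fin.snoc h s' : Fin (t + 2) → S) 0 = s₀ := by
              rw [show (0 : Fin (t + 2)) = Fin.castSucc 0 from rfl, Fin.snoc_castSucc]
              exact h0
            have hsafe' : ∀ i : Fin (t + 2), (Fin.snoc h s' : Fin (t + 2) → S) i ∈ C := by
              intro i
              refine Fin.lastCases ?_ ?_ i
              · rw [Fin.snoc_last]; exact hs'
              · intro j; rw [Fin.snoc_castSucc]; exact hsafe j
            exact ih (t + 1) (by omega) (Fin.snoc h s') h0' hsafe' 
          calc ∑ τ ∈ univ.filter (fun τ : Fin (n + 1) → S =>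
                (∀ i, τ i ∈ C) ∧ pre τ (t + 1) (by omega) = Fin.snoc h s'),
              ∏ i ∈ univ.filter (fun i : Fin n => t ≤ (i : ℕ)),
                T (τ i.castSucc) (π i (pre τ i (Nat.succ_le_succ i.isLt.le))) (τ i.succ)
                  / (1 - risk T C π (pre τ i (Nat.succ_le_succ i.isLt.le)))
              = ∑ τ ∈ univ.filter (fun τ : Fin (n + 1) → S =>
                  (∀ i, τ i ∈ C) ∧ pre τ (t + 1) (by omega) = Fin.snoc h s'),
                (T (h (Fin.last t)) (π t h) s' / (1 - risk T C π h)) *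
                ∏ i ∈ univ.filter (fun i : Fin n => t + 1 ≤ (i : ℕ)),
                  T (τ i.castSucc) (π i (pre τ i (Nat.succ_le_succ i.isLt.le))) (τ i.succ)
                    / (1 - risk T C π (pre τ i (Nat.succ_le_succ i.isLt.le))) := by
                refine Finset.sum_congr rfl ?_
                intro τ hτ
                simp only [mem_filter, mem_univ, true_and] at hτ
                obtain ⟨hsafeτ, hpre⟩ := hτ
                have hpt : pre τ ((tn : Fin n) : ℕ) (Nat.succ_le_succ tn.isLt.le) = h := by
                  funext i
                  have := congrFun hpre (Fin.castSucc i)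
                  rw [Fin.snoc_castSucc] at this
                  exact this
                have hcs : τ tn.castSucc = h (Fin.last t) := by
                  have := congrFun hpre (Fin.castSucc (Fin.last t))
                  rw [Fin.snoc_castSucc] at this
                  exact this
                have hsu : τ tn.succ = s' := by
                  have := congrFun hpre (Fin.last (t + 1))
                  rw [Fin.snoc_last] at this
                  exact this
                rw [hfilter, prod_insert htn_notmem, hpt, hcs, hsu]
            _ = _ := by rw [← Finset.mul_sum, hIH, mul_one]
        · simp only [hs', if_false, mul_zero]
          have hempty : univ.filter (fun τ : Fin (n + 1) → S =>
              (∀ i, τ i ∈ C) ∧ pre τ (t + 1) (by omega) = Fin.snoc h s') = ∅ := by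
            rw [Finset.filter_eq_empty_iff]
            rintro τ - ⟨hsafeτ, hpre⟩
            apply hs'
            have hτ1 : τ t1 = s' := by
              have := congrFun hpre (Fin.last (t + 1))
              rw [Fin.snoc_last] at this
              exact this
            exact hτ1 ▸ hsafeτ t1
          rw [hempty, sum_empty]
      rw [Finset.sum_congr rfl (fun s' _ => hstep s')]
      rw [← Finset.sum_filter_add_sum_filter_not univ (· ∈ C)]
      have h2 : ∑ s' ∈ univ.filter (fun s' => ¬ s' ∈ C),
          (T (h (Fin.last t)) (π t h) s' / (1 - risk T C π h)) * (if s' ∈ C then 1 else 0) = 0 := by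
        refine Finset.sum_eq_zero ?_
        intro s' hs'
        simp only [mem_filter] at hs'
        simp [hs'.2]
      rw [h2, add_zero]
      have h1 : ∑ s' ∈ univ.filter (· ∈ C),
          (T (h (Fin.last t)) (π t h) s' / (1 - risk T C π h)) * (if s' ∈ C then 1 else 0)
          = (∑ s' ∈ univ.filter (· ∈ C), T (h (Fin.last t)) (π t h) s') / (1 - risk T C π h) := by
        rw [Finset.sum_div]
        refine Finset.sum_congr rfl ?_
        intro s' hs'
        simp only [mem_filter] at hs'
        simp [hs'.2]
      rw [h1]
      have hsum : ∑ s' ∈ univ.filter (· ∈ C), T (h (Fin.last t)) (π t h) s'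
          = 1 - risk T C π h := by
        have := Finset.sum_filter_add_sum_filter_not univ (· ∈ C)
          (T (h (Fin.last t)) (π t h))
        rw [hT1] at this
        have hr : risk T C π h = ∑ s' ∈ univ.filter (fun s' => ¬ s' ∈ C),
            T (h (Fin.last t)) (π t h) s' := rfl
        rw [hr]
        linarith
      rw [hsum, div_self hρ0]
  exact key (n - t) t (by omega) h hh0 hhsafe
end
end

section
/- For every real number M, 6 - 0.02·M ≤ max (5 - 0.01·M) (10 - 0.05·M); in particular there is no M ∈ ℝ for which 6 - 0.02·M is strictly greater than both 5 - 0.01·M and 10 - 0.05·M. -/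
/-- For the single-decision MDP of Figure 2 of the paper with penalized rewards
`5 - 0.01M`, `6 - 0.02M`, `10 - 0.05M`, action `a₂` is never the unique maximizer of the
penalized reward: for every `M`, `6 - 0.02M ≤ max (5 - 0.01M) (10 - 0.05M)`; in particular
there is no `M` for which `6 - 0.02M` strictly exceeds both alternatives. -/
theorem penalty_method_cannot_recover_a2 :
    (∀ M : ℝ, 6 - 0.02 * M ≤ max (5 - 0.01 * M) (10 - 0.05 * M)) ∧
      ¬∃ M : ℝ, 5 - 0.01 * M < 6 - 0.02 * M ∧ 10 - 0.05 * M < 6 - 0.02 * M := by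
  constructor
  · intro M
    rcases le_or_gt M 100 with h | h
    · exact le_max_of_le_right (by linarith)
    · exact le_max_of_le_left (by linarith)
  · rintro ⟨M, h1, h2⟩
    linarith
end
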